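/- (Chvátal–Erdős, path version) Let G be a k-connected graph of order n. If the independence number of G is at most k + 1, then G is traceable. -/

import Mathlib

open Finset
section Helpers
variable {α : Type*}

private lemma chain'_rev {R : α → α → Prop} (hsymm : ∀ a b, R a b → R b a)
    {l : List α} (h : l.Chain' R) : l.reverse.Chain' R := by
  rw [List.Chain', List.isChain_reverse]
  exact h.imp fun a b hab => hsymm a b hab

private lemma getLast?_take_succ {l : List α} {i : ℕ} (h : i < l.length) :
    (l.take (i+1)).getLast? = some l[i] := by
  rw [List.getLast?_eq_getElem?]
  have hlen : (l.take (i+1)).length = i + 1 := by simp; omega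
  rw [hlen]
  simp only [Nat.add_sub_cancel, List.getElem?_take, if_pos (Nat.lt_succ_self i)]
  exact List.getElem?_eq_getElem h

private lemma head?_drop_eq {l : List α} {i : ℕ} (h : i < l.length) :
    (l.drop i).head? = some l[i] := by
  rw [List.head?_eq_getElem?, List.getElem?_drop]
  simp [List.getElem?_eq_getElem h]

private lemma take_ne_nil {l : List α} {i : ℕ} (h : i < l.length) :
    l.take (i+1) ≠ [] := by
  have : (l.take (i+1)).length = i + 1 := by simp; omega
  intro hc; rw [hc] at this; simp at this

private lemma drop_ne_nil {l : List α} {i : ℕ} (h : i < l.length) :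
    l.drop i ≠ [] := by
  have : (l.drop i).length = l.length - i := by simp
  intro hc; rw [hc] at this; simp at this; omega

end Helpers

section Surgery
variable {V : Type*} {G : SimpleGraph V}

/-- C3: rotation + extension. If `x = L[i]` has a neighbor `h` off `L`, and the head
`L[0]` is adjacent to `L[i+1]`, we get a longer good list. -/
private lemma surgery_rotate {L : List V} (hc : L.Chain' G.Adj) (hn : L.Nodup)
    (hmax : ∀ l : List V, l.Chain' G.Adj → l.Nodup → l.length ≤ L.length)
    {i : ℕ} (hi : i + 1 < L.length) {h : V} (hhL : h ∉ L)
    (hadj1 : G.Adj (L[i]'(by omega)) h)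
    (hadj2 : G.Adj (L[0]'(by omega)) (L[i+1]'hi)) : False := by
  set l' : List V := (L.take (i+1) ++ [h]).reverse ++ L.drop (i+1) with hl'
  have hilen : i < L.length := by omega
  have hchain : l'.Chain' G.Adj := by
    rw [hl', List.Chain', List.isChain_append]
    refine ⟨chain'_rev (fun a b hab => hab.symm) ?_, hc.drop _, ?_⟩
    · rw [List.Chain', List.isChain_append]
      refine ⟨hc.take _, List.isChain_singleton h, ?_⟩
      intro a ha b hb
      rw [getLast?_take_succ hilen] at ha
      simp at ha hb
      rw [← ha, ← hb] at *
      exact hadj1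
    · intro a ha b hb
      rw [List.getLast?_reverse, List.head?_append_of_ne_nil _ (take_ne_nil hilen),
        List.head?_eq_getElem?, List.getElem?_take, if_pos (by omega)] at ha
      rw [head?_drop_eq hi] at hb
      rw [List.getElem?_eq_getElem (by omega : 0 < L.length)] at ha
      simp at ha hb
      rw [← ha, ← hb]
      exact hadj2
  have hnodup : l'.Nodup := by
    rw [hl']
    rw [List.nodup_append]
    refine ⟨List.nodup_reverse.mpr ?_, (hn.sublist (List.drop_sublist _ _)) , ?_⟩
    · rw [List.nodup_append]
      refine ⟨hn.sublist (List.take_sublist _ _), List.nodup_singleton h, ?_⟩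
      intro a ha b hb hab
      subst hab
      simp at hb
      exact hhL (hb ▸ (List.mem_of_mem_take ha))
    · intro a ha b hb hab
      subst hab
      rw [List.mem_reverse, List.mem_append] at ha
      rcases ha with ha | ha
      · exact List.disjoint_take_drop hn (le_refl (i+1)) ha hb
      · simp at ha
        exact hhL (ha ▸ List.mem_of_mem_drop hb)
  have := hmax l' hchain hnodup
  rw [hl'] at this
  simp at this
  omega

end Surgery

section Surgery2
variable {V : Type*} {G : SimpleGraph V}

/-- C4: inserting a detour through the off-path component at position `i`. -/
private lemma surgery_insert {L : List V} (hc : L.Chain' G.Adj) (hn : L.Nodup)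
    (hmax : ∀ l : List V, l.Chain' G.Adj → l.Nodup → l.length ≤ L.length)
    {i : ℕ} (hi : i + 1 < L.length) {r : List V} (hrc : r.Chain' G.Adj) (hrn : r.Nodup)
    (hrne : r ≠ []) (hrL : ∀ x ∈ r, x ∉ L) {a b : V}
    (hra : r.head? = some a) (hrb : r.getLast? = some b)
    (hadj1 : G.Adj (L[i]'(by omega)) a)
    (hadj2 : G.Adj b (L[i+1]'hi)) : False := by
  set l' : List V := L.take (i+1) ++ r ++ L.drop (i+1) with hl'
  have hilen : i < L.length := by omega
  have hchain : l'.Chain' G.Adj := by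
    rw [hl', List.Chain', List.isChain_append]
    refine ⟨?_, hc.drop _, ?_⟩
    · rw [List.isChain_append]
      refine ⟨hc.take _, hrc, ?_⟩
      intro x hx y hy
      rw [getLast?_take_succ hilen] at hx
      rw [hra] at hy
      simp at hx hy
      rw [← hx, ← hy]
      exact hadj1
    · intro x hx y hy
      rw [List.getLast?_append_of_ne_nil _ hrne, hrb] at hx
      rw [head?_drop_eq hi] at hy
      simp at hx hy
      rw [← hx, ← hy]
      exact hadj2
  have hnodup : l'.Nodup := by
    rw [hl', List.nodup_append]
    refine ⟨?_, hn.sublist (List.drop_sublist _ _), ?_⟩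
    · rw [List.nodup_append]
      exact ⟨hn.sublist (List.take_sublist _ _), hrn,
        fun x hx y hx' hxy => by subst hxy; exact (hrL x hx') (List.mem_of_mem_take hx)⟩
    · intro x hx y hx' hxy
      subst hxy
      rcases List.mem_append.mp hx with hx | hx
      · exact List.disjoint_take_drop hn (le_refl (i+1)) hx hx'
      · exact (hrL x hx) (List.mem_of_mem_drop hx')
  have := hmax l' hchain hnodup
  rw [hl'] at this
  simp at this
  have : r.length = 0 := by omega
  exact hrne (List.length_eq_zero_iff.mp this)

/-- C5: the crossing surgery. Given attachments at positions `i < j`, a detour `r`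
from a neighbor of `L[i]` to a neighbor of `L[j]`, and an edge `L[i+1] ~ L[j+1]`,
we get a longer good list. -/
private lemma surgery_cross {L : List V} (hc : L.Chain' G.Adj) (hn : L.Nodup)
    (hmax : ∀ l : List V, l.Chain' G.Adj → l.Nodup → l.length ≤ L.length)
    {i j : ℕ} (hij : i < j) (hj : j + 1 < L.length)
    {r : List V} (hrc : r.Chain' G.Adj) (hrn : r.Nodup)
    (hrne : r ≠ []) (hrL : ∀ x ∈ r, x ∉ L) {a b : V}
    (hra : r.head? = some a) (hrb : r.getLast? = some b)
    (hadj1 : G.Adj (L[i]'(by omega)) a)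
    (hadj2 : G.Adj (L[j]'(by omega)) b)
    (hadj3 : G.Adj (L[i+1]'(by omega)) (L[j+1]'hj)) : False := by
  have hLsplit : (L.drop (i+1)).take (j-i) ++ L.drop (j+1) = L.drop (i+1) := by
    have h1 : L.drop (j+1) = (L.drop (i+1)).drop (j-i) := by
      rw [List.drop_drop]
      congr 1
      omega
    rw [h1, List.take_append_drop]
  set s : List V := (L.drop (i+1)).take (j-i) with hs
  have hslen : s.length = j - i := by
    rw [hs]
    simp
    omega
  have hsget : ∀ (t : ℕ) (ht : t < s.length), s[t] = L[i+1+t]'(by rw [hslen] at ht; omega) := by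
    intro t ht
    simp only [hs, List.getElem_take, List.getElem_drop]
  set l' : List V := L.take (i+1) ++ r ++ s.reverse ++ L.drop (j+1) with hl'
  have hilen : i < L.length := by omega
  have hsne : s ≠ [] := by
    intro hcon
    rw [hcon] at hslen
    simp at hslen
    omega
  have hshead : s.head? = some (L[i+1]'(by omega)) := by
    rw [List.head?_eq_getElem?, List.getElem?_eq_getElem (by rw [hslen]; omega : 0 < s.length)]
    rw [hsget 0 (by rw [hslen]; omega)]
  have hslast : s.getLast? = some (L[j]'(by omega)) := by
    rw [List.getLast?_eq_getElem?, List.getElem?_eq_getElem (by omega : s.length - 1 < s.length)]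
    rw [hsget (s.length - 1) (by omega)]
    congr 2
    omega
  have hchain : l'.Chain' G.Adj := by
    rw [hl', List.Chain', List.isChain_append]
    refine ⟨?_, hc.drop _, ?_⟩
    · rw [List.isChain_append]
      refine ⟨?_, chain'_rev (fun a b hab => hab.symm) ((hc.drop _).take _), ?_⟩
      · rw [List.isChain_append]
        refine ⟨hc.take _, hrc, ?_⟩
        intro x hx y hy
        rw [getLast?_take_succ hilen] at hx
        rw [hra] at hy
        simp at hx hy
        rw [← hx, ← hy]
        exact hadj1
      · intro x hx y hy
        rw [List.getLast?_append_of_ne_nil _ hrne, hrb] at hx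
        rw [List.head?_reverse, hslast] at hy
        simp at hx hy
        rw [← hx, ← hy]
        exact hadj2.symm
    · intro x hx y hy
      rw [List.getLast?_append_of_ne_nil _ (by simpa using hsne), List.getLast?_reverse,
        hshead] at hx
      rw [head?_drop_eq hj] at hy
      simp at hx hy
      rw [← hx, ← hy]
      exact hadj3
  have hLn2 : ((L.take (i+1) ++ s) ++ L.drop (j+1)).Nodup := by
    have : L.take (i+1) ++ s ++ L.drop (j+1) = L := by
      rw [List.append_assoc, hLsplit, List.take_append_drop]
    rw [this]
    exact hn
  rw [List.nodup_append] at hLn2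
  obtain ⟨hts, hdj, hdisj⟩ := hLn2
  rw [List.nodup_append] at hts
  obtain ⟨ht, hsn, hdisj2⟩ := hts
  have hnodup : l'.Nodup := by
    rw [hl']
    rw [List.nodup_append, List.nodup_append, List.nodup_append]
    refine ⟨⟨⟨ht, hrn, fun x hx y hx' hxy => by subst hxy; exact (hrL x hx') (List.mem_of_mem_take hx)⟩,
      List.nodup_reverse.mpr hsn, ?_⟩, hdj, ?_⟩
    · intro x hx y hx' hxy
      subst hxy
      rw [List.mem_reverse] at hx'
      rcases List.mem_append.mp hx with hx | hx
      · exact hdisj2 x hx x hx' rfl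
      · exact (hrL x hx) (List.mem_of_mem_drop (hLsplit ▸ List.mem_append_left _ hx'))
    · intro x hx y hx' hxy
      subst hxy
      rcases List.mem_append.mp hx with hx | hx
      · rcases List.mem_append.mp hx with hx | hx
        · exact hdisj x (List.mem_append_left _ hx) x hx' rfl
        · exact (hrL x hx) (List.mem_of_mem_drop hx')
      · rw [List.mem_reverse] at hx
        exact hdisj x (List.mem_append_right _ hx) x hx' rfl
  have := hmax l' hchain hnodup
  rw [hl'] at this
  simp [hslen] at this
  have : r.length = 0 := by omega
  exact hrne (List.length_eq_zero_iff.mp this)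

end Surgery2

section WalkOfChain
variable {V : Type*} {G : SimpleGraph V}

private lemma exists_walk_of_chain' (l : List V) (hne : l ≠ []) (hc : l.Chain' G.Adj) :
    ∃ (x y : V) (p : G.Walk x y), p.support = l := by
  induction l with
  | nil => exact absurd rfl hne
  | cons a t ih =>
    cases t with
    | nil => exact ⟨a, a, SimpleGraph.Walk.nil, rfl⟩
    | cons b t' =>
      obtain ⟨x, y, p, hp⟩ := ih (by simp) hc.tail
      have hx : x = b := by
        have h2 : x :: p.support.tail = b :: t' := by
          rw [← p.support_eq_cons, hp]
        exact (List.cons.injEq _ _ _ _ ▸ h2).1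
      subst hx
      have hab : G.Adj a x := (List.isChain_cons_cons.mp hc).1
      exact ⟨a, y, p.cons hab, by rw [SimpleGraph.Walk.support_cons, hp]⟩

end WalkOfChain

open Finset

/-- `G` is `k`-connected: more than `k` vertices, and deleting fewer than `k`
vertices leaves a connected graph. -/
def KConnected {V : Type*} [Fintype V] (k : ℕ) (G : SimpleGraph V) : Prop :=
  k < Fintype.card V ∧
    ∀ S : Finset V, S.card < k → (G.induce ((↑S : Set V)ᶜ)).Connected

/-- `G` is traceable: it has a Hamiltonian path. -/
def IsTraceable {V : Type*} [DecidableEq V] (G : SimpleGraph V) : Prop :=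
  ∃ (u v : V) (p : G.Walk u v), p.IsHamiltonian

theorem chvatal_erdos_traceable
    {V : Type*} [Fintype V] [DecidableEq V] (G : SimpleGraph V)
    (k : ℕ) (hconn : KConnected k G)
    (hindep : ∀ I : Finset V, (∀ u ∈ I, ∀ v ∈ I, ¬ G.Adj u v) → I.card ≤ k + 1) :
    IsTraceable G := by
  classical
  obtain ⟨hkcard, hconn2⟩ := hconn
  have hVpos : 0 < Fintype.card V := by omega
  obtain ⟨v0⟩ := Fintype.card_pos_iff.mp hVpos
  let P : ℕ → Prop := fun n => ∃ l : List V, l.Chain' G.Adj ∧ l.Nodup ∧ l.length = n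
  have hP1 : P 1 := ⟨[v0], List.isChain_singleton v0, List.nodup_singleton v0, rfl⟩
  obtain ⟨L, hLc, hLn, hLlen⟩ : P (Nat.findGreatest P (Fintype.card V)) :=
    Nat.findGreatest_spec hVpos hP1
  have hmax : ∀ l : List V, l.Chain' G.Adj → l.Nodup → l.length ≤ L.length := fun l hc hn => by
    rw [hLlen]; exact Nat.le_findGreatest hn.length_le_card ⟨l, hc, hn, rfl⟩
  have hLpos : 1 ≤ L.length := by
    rw [hLlen]; exact Nat.le_findGreatest hVpos hP1
  have hLne : L ≠ [] := by intro h; rw [h] at hLpos; simp at hLpos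
  by_cases hcover : ∀ x : V, x ∈ L
  · obtain ⟨x, y, p, hp⟩ := exists_walk_of_chain' L hLne hLc
    have hpath : p.IsPath := p.isPath_def.mpr (by rw [hp]; exact hLn)
    exact ⟨x, y, p, hpath.isHamiltonian_iff.mpr (fun w => by rw [hp]; exact hcover w)⟩
  · exfalso
    push_neg at hcover
    obtain ⟨h₀, hh₀⟩ := hcover
    -- the graph of edges avoiding `L`
    let K : SimpleGraph V :=
      { Adj := fun x y => G.Adj x y ∧ x ∉ L ∧ y ∉ L
        symm := ⟨fun a b h => ⟨h.1.symm, h.2.2, h.2.1⟩⟩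
        loopless := ⟨fun a h => G.irrefl h.1⟩ }
    have hKnotL : ∀ (a b : V) (w : K.Walk a b), a ∉ L → b ∉ L := by
      intro a b w
      induction w with
      | nil => exact id
      | cons hadj w ih => exact fun _ => ih hadj.2.2
    -- the component of h₀ off the path
    let H : Set V := {x | K.Reachable h₀ x}
    have hh₀H : h₀ ∈ H := SimpleGraph.Reachable.refl h₀
    have hHL : ∀ x ∈ H, x ∉ L := fun x hx => by
      obtain ⟨w⟩ := hx; exact hKnotL _ _ w hh₀
    have hHpath : ∀ a ∈ H, ∀ b ∈ H, ∃ r : List V,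
        r.Chain' G.Adj ∧ r.Nodup ∧ r ≠ [] ∧ r.head? = some a ∧ r.getLast? = some b ∧
        ∀ x ∈ r, x ∉ L := by
      intro a ha b hb
      obtain ⟨w⟩ := (SimpleGraph.Reachable.symm ha).trans hb
      refine ⟨w.bypass.support, ?_, w.bypass_isPath.support_nodup,
        w.bypass.support_ne_nil, ?_, ?_, ?_⟩
      · exact (w.bypass.isChain_adj_support).imp (fun _ _ hh => hh.1)
      · rw [w.bypass.support_eq_cons]; rfl
      · rw [List.getLast?_eq_getLast w.bypass.support_ne_nil]
        congr 1
        exact w.bypass.getLast_support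
      · intro x hx
        have hrx : K.Reachable a x := ⟨w.bypass.takeUntil x hx⟩
        exact hHL x (ha.trans hrx)
    -- attachment set
    let S : Finset V := L.toFinset.filter (fun x => ∃ h ∈ H, G.Adj x h)
    have hSsub : ∀ x ∈ S, x ∈ L := fun x hx => List.mem_toFinset.mp (Finset.mem_filter.mp hx).1
    set u : V := L.head hLne with hu
    have huL : u ∈ L := List.head_mem hLne
    have hu0 : u = L[0]'(by omega) := List.head_eq_getElem _
    have hheadH : ∀ h ∈ H, ¬ G.Adj u h := by
      intro h hH hadj
      have hchain : (h :: L).Chain' G.Adj := List.isChain_cons.mpr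
        ⟨fun y hy => by
          rw [List.head?_eq_head hLne] at hy
          simp at hy
          rw [← hy]; exact hadj.symm, hLc⟩
      have hnodup : (h :: L).Nodup := List.nodup_cons.mpr ⟨hHL h hH, hLn⟩
      have := hmax _ hchain hnodup
      simp only [List.length_cons] at this
      omega
    have hlastH : ∀ h ∈ H, ¬ G.Adj (L.getLast hLne) h := by
      intro h hH hadj
      have hchain : (L ++ [h]).Chain' G.Adj := List.isChain_append.mpr
        ⟨hLc, List.isChain_singleton h, by
          intro x hx y hy
          rw [List.getLast?_eq_getLast hLne] at hx
          simp at hx hy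
          rw [← hx, ← hy]; exact hadj⟩
      have hnodup : (L ++ [h]).Nodup := by
        rw [List.nodup_append]
        exact ⟨hLn, List.nodup_singleton h,
          fun x hx y hy hxy => by simp at hy; rw [hxy, hy] at hx; exact (hHL h hH) hx⟩
      have := hmax _ hchain hnodup
      simp only [List.length_append, List.length_cons, List.length_nil] at this
      omega
    have huS : u ∉ S := by
      intro hmem
      obtain ⟨h, hH, hadj⟩ := (Finset.mem_filter.mp hmem).2
      exact hheadH h hH hadj
    -- the attachment set has at least k elements
    have hSk : k ≤ S.card := by
      by_contra hlt
      push_neg at hlt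
      have hcon := hconn2 S hlt
      have hh₀c : h₀ ∈ ((↑S : Set V)ᶜ) := fun hmem => hh₀ (hSsub h₀ hmem)
      have huc : u ∈ ((↑S : Set V)ᶜ) := fun hmem => huS hmem
      have hinv : ∀ (a b : ((↑S : Set V)ᶜ : Set V)) (w : (G.induce ((↑S : Set V)ᶜ)).Walk a b),
          (a : V) ∈ H → (b : V) ∈ H := by
        intro a b w
        induction w with
        | nil => exact id
        | @cons x y z hadj w ih =>
          intro hxH
          apply ih
          have hGadj : G.Adj (x : V) (y : V) := hadj
          have hyL : (y : V) ∉ L := by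
            intro hyL
            exact y.2 (Finset.mem_coe.mpr (Finset.mem_filter.mpr
              ⟨List.mem_toFinset.mpr hyL, ⟨x, hxH, hGadj.symm⟩⟩))
          exact hxH.trans (SimpleGraph.Adj.reachable
            (⟨hGadj, hHL _ hxH, hyL⟩ : K.Adj (x : V) (y : V)))
      obtain ⟨w⟩ := hcon.preconnected ⟨h₀, hh₀c⟩ ⟨u, huc⟩
      exact (hHL u (hinv _ _ w hh₀H)) huL
    -- successor function along L
    let f : V → V := fun x => L.getD (L.idxOf x + 1) h₀
    have hSidx : ∀ x ∈ S, L.idxOf x + 1 < L.length := by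
      intro x hx
      have hxL : x ∈ L := hSsub x hx
      have hi : L.idxOf x < L.length := List.idxOf_lt_length_iff.mpr hxL
      by_contra hge
      have hieq : L.idxOf x = L.length - 1 := by omega
      have hval := List.getElem_idxOf hi
      simp only [hieq] at hval
      have hxlast : x = L.getLast hLne := by
        rw [List.getLast_eq_getElem, hval]
      obtain ⟨h, hH, hadj⟩ := (Finset.mem_filter.mp hx).2
      exact hlastH h hH (hxlast ▸ hadj)
    have hfS : ∀ x (hx : x ∈ S), f x = L[L.idxOf x + 1]'(hSidx x hx) := fun x hx =>
      List.getD_eq_getElem L h₀ (hSidx x hx)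
    have hfL : ∀ x (hx : x ∈ S), f x ∈ L := fun x hx => by
      rw [hfS x hx]; exact List.getElem_mem _
    have hfu : ∀ x (hx : x ∈ S), f x ≠ u := by
      intro x hx heq
      rw [hfS x hx, hu0] at heq
      have := (hLn.getElem_inj_iff).mp heq
      omega
    have hfinj : ∀ x (hx : x ∈ S), ∀ y (hy : y ∈ S), f x = f y → x = y := by
      intro x hx y hy heq
      rw [hfS x hx, hfS y hy] at heq
      have hidx : L.idxOf x + 1 = L.idxOf y + 1 := (hLn.getElem_inj_iff).mp heq
      have h1 := List.getElem_idxOf (List.idxOf_lt_length_iff.mpr (hSsub x hx))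
      have h2 := List.getElem_idxOf (List.idxOf_lt_length_iff.mpr (hSsub y hy))
      rw [← h1, ← h2]
      simp only [Nat.add_right_cancel_iff] at hidx
      simp only [hidx]
    -- claim C3 : successors are not adjacent to the head
    have hC3 : ∀ x (hx : x ∈ S), ¬ G.Adj u (f x) := by
      intro x hx hadj
      obtain ⟨h, hH, hadjxh⟩ := (Finset.mem_filter.mp hx).2
      rw [hu0, hfS x hx] at hadj
      refine surgery_rotate hLc hLn hmax (hSidx x hx) (hHL h hH) ?_ hadj
      rw [List.getElem_idxOf]; exact hadjxh
    -- claim C4 : successors are not adjacent to the off-path component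
    have hC4 : ∀ x (hx : x ∈ S), ∀ h ∈ H, ¬ G.Adj (f x) h := by
      intro x hx h hH hadj
      obtain ⟨hw, hwH, hadjxw⟩ := (Finset.mem_filter.mp hx).2
      obtain ⟨r, hrc, hrn, hrne, hra, hrb, hrL⟩ := hHpath hw hwH h hH
      rw [hfS x hx] at hadj
      refine surgery_insert hLc hLn hmax (hSidx x hx) hrc hrn hrne hrL hra hrb ?_ hadj.symm
      rw [List.getElem_idxOf]; exact hadjxw
    -- claim C5 : successors are pairwise non-adjacent
    have hC5 : ∀ x (hx : x ∈ S), ∀ y (hy : y ∈ S), x ≠ y → ¬ G.Adj (f x) (f y) := by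
      have key : ∀ x (hx : x ∈ S), ∀ y (hy : y ∈ S),
          L.idxOf x < L.idxOf y → ¬ G.Adj (f x) (f y) := by
        intro x hx y hy hij hadj
        obtain ⟨hx', ⟨hwx, hwxH, hadjx⟩⟩ := Finset.mem_filter.mp hx
        obtain ⟨hy', ⟨hwy, hwyH, hadjy⟩⟩ := Finset.mem_filter.mp hy
        obtain ⟨r, hrc, hrn, hrne, hra, hrb, hrL⟩ := hHpath hwx hwxH hwy hwyH
        rw [hfS x hx, hfS y hy] at hadj
        refine surgery_cross hLc hLn hmax hij (hSidx y hy) hrc hrn hrne hrL hra hrb ?_ ?_ hadj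
        · rw [List.getElem_idxOf]; exact hadjx
        · rw [List.getElem_idxOf]; exact hadjy
      intro x hx y hy hne hadj
      rcases lt_trichotomy (L.idxOf x) (L.idxOf y) with h | h | h
      · exact key x hx y hy h hadj
      · apply hne
        have h1 := List.getElem_idxOf (List.idxOf_lt_length_iff.mpr (hSsub x hx))
        have h2 := List.getElem_idxOf (List.idxOf_lt_length_iff.mpr (hSsub y hy))
        rw [← h1, ← h2]
        simp only [h]
      · exact key y hy x hx h hadj.symm
    -- the independent set
    set I : Finset V := insert h₀ (insert u (S.image f)) with hI
    have hind : ∀ a ∈ I, ∀ b ∈ I, ¬ G.Adj a b := by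
      intro a ha b hb hadj
      simp only [hI, Finset.mem_insert, Finset.mem_image] at ha hb
      rcases ha with rfl | rfl | ⟨x, hx, rfl⟩ <;> rcases hb with rfl | rfl | ⟨y, hy, rfl⟩
      · exact G.irrefl hadj
      · exact hheadH a hh₀H hadj.symm
      · exact hC4 y hy a hh₀H hadj.symm
      · exact hheadH b hh₀H hadj
      · exact G.irrefl hadj
      · exact hC3 y hy hadj
      · exact hC4 x hx b hh₀H hadj
      · exact hC3 x hx hadj.symm
      · by_cases hxy : x = y
        · subst hxy; exact G.irrefl hadj
        · exact hC5 x hx y hy hxy hadj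
    have hcard : S.card + 2 ≤ I.card := by
      have himg : (S.image f).card = S.card :=
        Finset.card_image_of_injOn (fun x hx y hy => hfinj x hx y hy)
      have hu_img : u ∉ S.image f := by
        intro hmem
        obtain ⟨x, hx, heq⟩ := Finset.mem_image.mp hmem
        exact hfu x hx heq
      have hh₀_ins : h₀ ∉ insert u (S.image f) := by
        intro hmem
        rcases Finset.mem_insert.mp hmem with heq | hmem
        · exact hh₀ (heq ▸ huL)
        · obtain ⟨x, hx, heq⟩ := Finset.mem_image.mp hmem
          exact hh₀ (heq ▸ hfL x hx)
      rw [hI, Finset.card_insert_of_notMem hh₀_ins, Finset.card_insert_of_notMem hu_img, himg]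
    have := hindep I hind
    omega
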